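/- arXiv:1802.08892 — 7 statements merged into one kernel-verified Lean document; each statement's English description precedes it below -/
import Mathlib

section
/- Let V be a vector space over a field 𝔽, n ≥ 2, f an n-linear map on V, and ℬ a basis of V. If (X₁, X₂, …, X_{m-1}, X_m) is a connection from e_i to e_j, where e_i, e_j ∈ ℬ with e_i ≠ e_j, then the reversed, bar-swapped list (X̄_m, X̄_{m-1}, …, X̄₂, X̄₁) is a connection from e_j to e_i, where X̄_t denotes the tuple obtained from X_t by applying the bar-swap to each entry. -/
/- Common setting: `V` is a vector space over a field `𝔽`, and `f` is an
`n`-linear map on `V` where `n = m + 1 ≥ 2` (i.e. `1 ≤ m`).  Tuples of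
length `n - 1 = m` index the last arguments of the set-valued map `F`. -/

open scoped Classical

noncomputable section

variable {𝔽 V I : Type*}

/-- The set `V* = V \ {0}` of nonzero vectors. -/
abbrev Vstar (V : Type*) [Zero V] := {v : V // v ≠ 0}

/-- The disjoint union `ℬ ∪̇ ℬ̄`, encoded by indices: `(false, i)` stands for the
basis vector `e i ∈ ℬ` and `(true, i)` for the formal bar symbol `ē i ∈ ℬ̄`. -/
abbrev BSym (I : Type*) := Bool × I

/-- The bar-swap on `ℬ ∪̇ ℬ̄`. -/
def barSwap {I : Type*} (s : BSym I) : BSym I := (!s.1, s.2)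

variable [Field 𝔽] [AddCommGroup V] [Module 𝔽 V] {m : ℕ}

/-- A basis vector, as an element of `V*`. -/
def bstar (b : Module.Basis I 𝔽 V) (i : I) : Vstar V := ⟨b i, b.ne_zero i⟩

/-- The set-valued map `F : 𝒫(V*) × (ℬ ∪̇ ℬ̄)^{n-1} → 𝒫(V*)` associated to the
`n`-linear map `f` and the basis `b` (here `n = m + 1`). -/
def Fmap (b : Module.Basis I 𝔽 V) (f : MultilinearMap 𝔽 (fun _ : Fin (m + 1) => V) V)
    (U : Set (Vstar V)) (ξ : Fin m → BSym I) : Set (Vstar V) :=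
  if ∀ t, (ξ t).1 = false then
    {w | ∃ (k : Fin (m + 1)) (σ : Equiv.Perm (Fin m)), ∃ u ∈ U,
      f (Fin.insertNth k u.1 fun t => b (ξ (σ t)).2) = w.1}
  else if ∀ t, (ξ t).1 = true then
    {w | ∃ (k : Fin (m + 1)) (σ : Equiv.Perm (Fin m)), ∃ u ∈ U,
      f (Fin.insertNth k w.1 fun t => b (ξ (σ t)).2) = u.1}
  else ∅

/-- Iterated application of `F` along a list of `(n-1)`-tuples. -/
def iterF (b : Module.Basis I 𝔽 V) (f : MultilinearMap 𝔽 (fun _ : Fin (m + 1) => V) V) :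
    Set (Vstar V) → List (Fin m → BSym I) → Set (Vstar V)
  | U, [] => U
  | U, X :: Xs => iterF b f (Fmap b f U X) Xs

/-- `X` is a connection from `e i` to `e j`.  (Since `F(∅,⋯) = ∅`, the requirement
that all intermediate iterated images are nonempty is equivalent to the final
image containing `e j`.) -/
def IsConnection (b : Module.Basis I 𝔽 V) (f : MultilinearMap 𝔽 (fun _ : Fin (m + 1) => V) V)
    (i j : I) (X : List (Fin m → BSym I)) : Prop :=
  X ≠ [] ∧ bstar b j ∈ iterF b f {bstar b i} X

/-- `e i` is connected to `e j`. -/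
def Connected (b : Module.Basis I 𝔽 V) (f : MultilinearMap 𝔽 (fun _ : Fin (m + 1) => V) V)
    (i j : I) : Prop :=
  i = j ∨ ∃ X : List (Fin m → BSym I), IsConnection b f i j X

/-- Two subspaces `W₁, W₂` are `f`-orthogonal. -/
def FOrthogonal (f : MultilinearMap 𝔽 (fun _ : Fin (m + 1) => V) V)
    (W₁ W₂ : Submodule 𝔽 V) : Prop :=
  ∀ k₁ k₂ : Fin (m + 1), k₁ ≠ k₂ →
    ∀ v : Fin (m + 1) → V, v k₁ ∈ W₁ → v k₂ ∈ W₂ → f v = 0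

/-- A subspace `W` is strongly `f`-invariant: `f(V,…,W,…,V) ⊆ W` for every slot. -/
def StronglyInvariant (f : MultilinearMap 𝔽 (fun _ : Fin (m + 1) => V) V)
    (W : Submodule 𝔽 V) : Prop :=
  ∀ (k : Fin (m + 1)) (v : Fin (m + 1) → V), v k ∈ W → f v ∈ W

/-- `V_{[e i]}`, the span of the connection class of `e i`. -/
def classSpan (b : Module.Basis I 𝔽 V) (f : MultilinearMap 𝔽 (fun _ : Fin (m + 1) => V) V)
    (i : I) : Submodule 𝔽 V :=
  Submodule.span 𝔽 (⇑b '' {j | Connected b f i j})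

/-- The projection `Π_{V_{[e c]}} : V → V_{[e c]}` relative to the decomposition
`V = ⊕ V_{[e i]}` (expressed through basis coordinates). -/
def projClass (b : Module.Basis I 𝔽 V) (f : MultilinearMap 𝔽 (fun _ : Fin (m + 1) => V) V)
    (c : I) : V →ₗ[𝔽] V :=
  b.constr 𝔽 fun j => if Connected b f c j then b j else 0

/-- One step of the relation `≈`: the sum over `k₁ < k₂` of
`Π_{V_{[c]}}(f(V,…,V_{[d]},…,V_{[d]},…,V)) + Π_{V_{[d]}}(f(V,…,V_{[c]},…,V_{[c]},…,V))`
is nonzero. -/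
def ApproxStep (b : Module.Basis I 𝔽 V) (f : MultilinearMap 𝔽 (fun _ : Fin (m + 1) => V) V)
    (c d : I) : Prop :=
  ∃ k₁ k₂ : Fin (m + 1), k₁ < k₂ ∧
    ((∃ v : Fin (m + 1) → V, v k₁ ∈ classSpan b f d ∧ v k₂ ∈ classSpan b f d ∧
        projClass b f c (f v) ≠ 0) ∨
     (∃ v : Fin (m + 1) → V, v k₁ ∈ classSpan b f c ∧ v k₂ ∈ classSpan b f c ∧
        projClass b f d (f v) ≠ 0))

/-- `V_{[e i]} ≈ V_{[e j]}`: either they coincide (same connection class) or they are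
linked by a finite chain of classes with nonvanishing projection sums. -/
def Approx (b : Module.Basis I 𝔽 V) (f : MultilinearMap 𝔽 (fun _ : Fin (m + 1) => V) V)
    (i j : I) : Prop :=
  Relation.ReflTransGen (fun c d => Connected b f c d ∨ ApproxStep b f c d) i j

/-- `⌢V_{[e i]} = ⊕_{V_{[e j]} ∈ [V_{[e i]}]} V_{[e j]}`. -/
def hatSpan (b : Module.Basis I 𝔽 V) (f : MultilinearMap 𝔽 (fun _ : Fin (m + 1) => V) V)
    (i : I) : Submodule 𝔽 V :=
  Submodule.span 𝔽 (⇑b '' {j | Approx b f i j})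

/-- Two decompositions of `V` as `f`-orthogonal direct sums of strongly `f`-invariant
subspaces (given as the sets of their summands) are isomorphic: there is a linear
automorphism `h` of `V` commuting with `f` carrying the summands of the first
bijectively onto the summands of the second. -/
def IsoDecomp (f : MultilinearMap 𝔽 (fun _ : Fin (m + 1) => V) V)
    (S T : Set (Submodule 𝔽 V)) : Prop :=
  ∃ h : V ≃ₗ[𝔽] V,
    (∀ v : Fin (m + 1) → V, f (fun k => h (v k)) = h (f v)) ∧
    (Submodule.map (h : V →ₗ[𝔽] V)) '' S = T

/-- `X` is a strongly `f'`-invariant subspace of `W`, where `f'` is the restriction of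
`f` to `W`: `f(W,…,X,…,W) ⊆ X` for every slot. -/
def SInvIn (f : MultilinearMap 𝔽 (fun _ : Fin (m + 1) => V) V)
    (W X : Submodule 𝔽 V) : Prop :=
  ∀ (k : Fin (m + 1)) (v : Fin (m + 1) → V), (∀ t, v t ∈ W) → v k ∈ X → f v ∈ X

/-- `W` is `f'`-simple, `f'` being the restriction of `f` to `W`: the restricted map is
nonzero and the only strongly `f'`-invariant subspaces of `W` are `0` and `W`. -/
def SimpleIn (f : MultilinearMap 𝔽 (fun _ : Fin (m + 1) => V) V)
    (W : Submodule 𝔽 V) : Prop :=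
  (∃ v : Fin (m + 1) → V, (∀ t, v t ∈ W) ∧ f v ≠ 0) ∧
  ∀ X : Submodule 𝔽 V, X ≤ W → SInvIn f W X → X = ⊥ ∨ X = W

/-- The annihilator of the restriction `f'` of `f` to `W`. -/
def annIn (f : MultilinearMap 𝔽 (fun _ : Fin (m + 1) => V) V)
    (W : Submodule 𝔽 V) : Set V :=
  {w | w ∈ W ∧ ∀ (k : Fin (m + 1)) (v : Fin (m + 1) → V),
    (∀ t, v t ∈ W) → v k = w → f v = 0}

/-- `𝓘(w)`: the smallest strongly `f'`-invariant subspace of `W` containing `w`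
(equivalently, the ideal of `(W, f')` generated by `w`). -/
def idealGenIn (f : MultilinearMap 𝔽 (fun _ : Fin (m + 1) => V) V)
    (W : Submodule 𝔽 V) (w : V) : Submodule 𝔽 V :=
  sInf {X : Submodule 𝔽 V | X ≤ W ∧ SInvIn f W X ∧ w ∈ X}

/-- `S` is an `i`-division basis of `W` with respect to the restriction `f'` of `f`:
whenever `c ∈ S`, `b₁, …, b_{n-1} ∈ W` and `f'(b₁,…,c,…,b_{n-1}) = w ≠ 0` with `c` in
some slot `k`, then `c, b₁, …, b_{n-1} ∈ 𝓘(w)`. -/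
def IDivisionBasisIn (f : MultilinearMap 𝔽 (fun _ : Fin (m + 1) => V) V)
    (W : Submodule 𝔽 V) (S : Set V) : Prop :=
  ∀ c ∈ S, ∀ (k : Fin (m + 1)) (v : Fin (m + 1) → V),
    (∀ t, v t ∈ W) → v k = c → f v ≠ 0 → ∀ t, v t ∈ idealGenIn f W (f v)

lemma mem_Fmap_iff (b : Module.Basis I 𝔽 V) (f : MultilinearMap 𝔽 (fun _ : Fin (m + 1) => V) V)
    (U : Set (Vstar V)) (ξ : Fin m → BSym I) (w : Vstar V) :
    w ∈ Fmap b f U ξ ↔ ∃ u ∈ U, w ∈ Fmap b f {u} ξ := by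
  unfold Fmap
  split_ifs with h1 h2
  · simp only [Set.mem_setOf_eq, Set.mem_singleton_iff]
    constructor
    · rintro ⟨k, σ, u, hu, he⟩; exact ⟨u, hu, k, σ, u, rfl, he⟩
    · rintro ⟨u, hu, k, σ, u', rfl, he⟩; exact ⟨k, σ, u', hu, he⟩
  · simp only [Set.mem_setOf_eq, Set.mem_singleton_iff]
    constructor
    · rintro ⟨k, σ, u, hu, he⟩; exact ⟨u, hu, k, σ, u, rfl, he⟩
    · rintro ⟨u, hu, k, σ, u', rfl, he⟩; exact ⟨k, σ, u', hu, he⟩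
  · simp

lemma swap_mem (hm : 1 ≤ m) (b : Module.Basis I 𝔽 V)
    (f : MultilinearMap 𝔽 (fun _ : Fin (m + 1) => V) V)
    (u w : Vstar V) (ξ : Fin m → BSym I) :
    w ∈ Fmap b f {u} ξ ↔ u ∈ Fmap b f {w} (fun t => barSwap (ξ t)) := by
  have t0 : Fin m := ⟨0, hm⟩
  simp only [Fmap, barSwap]
  by_cases h1 : ∀ t, (ξ t).1 = false
  · have h2 : ¬ ∀ t, (!(ξ t).1) = false := by
      intro hh; have := hh t0; simp [h1 t0] at this
    have h3 : ∀ t, (!(ξ t).1) = true := by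
      intro t; simp [h1 t]
    simp only [if_pos h1, eq_false h2, eq_true h3, ite_true, ite_false]
    simp only [Set.mem_setOf_eq, Set.mem_singleton_iff]
    constructor
    · rintro ⟨k, σ, x, rfl, he⟩; exact ⟨k, σ, _, rfl, he⟩
    · rintro ⟨k, σ, x, rfl, he⟩; exact ⟨k, σ, _, rfl, he⟩
  · by_cases h4 : ∀ t, (ξ t).1 = true
    · have h5 : ∀ t, (!(ξ t).1) = false := by
        intro t; simp [h4 t]
      simp only [if_neg h1, if_pos h4, eq_true h5, ite_true, ite_false]
      simp only [Set.mem_setOf_eq, Set.mem_singleton_iff]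
      constructor
      · rintro ⟨k, σ, x, rfl, he⟩; exact ⟨k, σ, _, rfl, he⟩
      · rintro ⟨k, σ, x, rfl, he⟩; exact ⟨k, σ, _, rfl, he⟩
    · have h5 : ¬ ∀ t, (!(ξ t).1) = false := by
        intro hh
        exact h4 fun t => by have := hh t; simpa using this
      have h6 : ¬ ∀ t, (!(ξ t).1) = true := by
        intro hh
        exact h1 fun t => by have := hh t; simpa using this
      simp only [if_neg h1, if_neg h4, eq_false h5, eq_false h6, ite_false]
      simp

lemma iterF_append (b : Module.Basis I 𝔽 V) (f : MultilinearMap 𝔽 (fun _ : Fin (m + 1) => V) V)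
    (U : Set (Vstar V)) (L1 L2 : List (Fin m → BSym I)) :
    iterF b f U (L1 ++ L2) = iterF b f (iterF b f U L1) L2 := by
  induction L1 generalizing U with
  | nil => simp [iterF]
  | cons x xs ih => simp [iterF, ih]

lemma mem_iterF_iff (b : Module.Basis I 𝔽 V) (f : MultilinearMap 𝔽 (fun _ : Fin (m + 1) => V) V)
    (U : Set (Vstar V)) (X : List (Fin m → BSym I)) (w : Vstar V) :
    w ∈ iterF b f U X ↔ ∃ u ∈ U, w ∈ iterF b f {u} X := by
  induction X generalizing U with
  | nil => simp [iterF]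
  | cons x xs ih =>
    simp only [iterF]
    rw [ih]
    constructor
    · rintro ⟨v, hv, hw⟩
      obtain ⟨u, hu, hv'⟩ := (mem_Fmap_iff b f U x v).1 hv
      exact ⟨u, hu, (ih _).2 ⟨v, hv', hw⟩⟩
    · rintro ⟨u, hu, hw⟩
      obtain ⟨v, hv, hw'⟩ := (ih _).1 hw
      exact ⟨v, (mem_Fmap_iff b f U x v).2 ⟨u, hu, hv⟩, hw'⟩

lemma rev_mem (hm : 1 ≤ m) (b : Module.Basis I 𝔽 V)
    (f : MultilinearMap 𝔽 (fun _ : Fin (m + 1) => V) V)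
    (X : List (Fin m → BSym I)) :
    ∀ u w : Vstar V, w ∈ iterF b f {u} X →
      u ∈ iterF b f {w} ((X.map fun x => fun t => barSwap (x t)).reverse) := by
  induction X with
  | nil => intro u w hw; simp only [iterF, Set.mem_singleton_iff] at hw ⊢; exact hw.symm
  | cons x xs ih =>
    intro u w hw
    simp only [iterF] at hw
    obtain ⟨v, hv, hw'⟩ := (mem_iterF_iff b f _ xs w).1 hw
    have hvw := ih v w hw'
    have := (swap_mem hm b f u v x).1 hv
    simp only [List.map_cons, List.reverse_cons]
    rw [iterF_append]
    show u ∈ iterF b f (Fmap b f _ _) []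
    simp only [iterF]
    exact (mem_Fmap_iff b f _ _ u).2 ⟨v, hvw, this⟩

/-- Lemma: reversed bar-swapped connections. -/
theorem stmt3 (hm : 1 ≤ m) (b : Module.Basis I 𝔽 V)
    (f : MultilinearMap 𝔽 (fun _ : Fin (m + 1) => V) V)
    (i j : I) (hij : b i ≠ b j) (X : List (Fin m → BSym I))
    (h : IsConnection b f i j X) :
    IsConnection b f j i ((X.map fun x => fun t => barSwap (x t)).reverse) := by
  obtain ⟨hne, hmem⟩ := h
  refine ⟨by simpa using hne, rev_mem hm b f X _ _ hmem⟩
end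
end

section
/- Let V be a vector space over a field 𝔽, n ≥ 2, f an n-linear map on V, and ℬ a basis of V. For every class [V_{[e_i]}] ∈ ℱ/≈, the subspace ⌢V_{[e_i]} := ⊕_{V_{[e_j]} ∈ [V_{[e_i]}]} V_{[e_j]} is a strongly f-invariant linear subspace of V, i.e. f(V, …, ⌢V_{[e_i]} in slot j, …, V) ⊆ ⌢V_{[e_i]} for all j ∈ {1,…,n}. -/
/- Common setting: `V` is a vector space over a field `𝔽`, and `f` is an
`n`-linear map on `V` where `n = m + 1 ≥ 2` (i.e. `1 ≤ m`).  Tuples of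
length `n - 1 = m` index the last arguments of the set-valued map `F`. -/

open scoped Classical

noncomputable section

variable {𝔽 V I : Type*}

variable [Field 𝔽] [AddCommGroup V] [Module 𝔽 V] {m : ℕ}

lemma connected_of_apply_ne_zero (hm : 1 ≤ m) (b : Module.Basis I 𝔽 V)
    (f : MultilinearMap 𝔽 (fun _ : Fin (m + 1) => V) V)
    (a : Fin (m + 1) → I) (hf : f (fun s => b (a s)) ≠ 0) (k t : Fin (m + 1)) :
    Connected b f (a k) (a t) := by
  right
  refine ⟨[fun s => (false, a (k.succAbove s)), fun s => (true, a (t.succAbove s))],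
    by simp, ?_⟩
  show bstar b (a t) ∈ Fmap b f (Fmap b f {bstar b (a k)} _) _
  have h1 : (⟨f (fun s => b (a s)), hf⟩ : Vstar V) ∈
      Fmap b f {bstar b (a k)} (fun s => (false, a (k.succAbove s))) := by
    rw [Fmap, if_pos (fun s => rfl)]
    refine ⟨k, 1, bstar b (a k), rfl, ?_⟩
    show f (Fin.insertNth k (b (a k)) fun s => b (a (k.succAbove s))) = _
    congr 1
    exact Fin.insertNth_self_removeNth k (fun s => b (a s))
  rw [Fmap, if_neg (by intro h; exact Bool.noConfusion (h ⟨0, hm⟩)),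
    if_pos (fun s => rfl)]
  refine ⟨t, 1, ⟨f (fun s => b (a s)), hf⟩, h1, ?_⟩
  show f (Fin.insertNth t (b (a t)) fun s => b (a (t.succAbove s))) = _
  congr 1
  exact Fin.insertNth_self_removeNth t (fun s => b (a s))

lemma repr_projClass (b : Module.Basis I 𝔽 V) (f : MultilinearMap 𝔽 (fun _ : Fin (m + 1) => V) V)
    (c : I) (x : V) : b.repr (projClass b f c x) c = b.repr x c := by
  rw [projClass, Module.Basis.constr_apply, map_finsuppSum, Finsupp.sum_apply]
  rw [Finsupp.sum_eq_single c]
  · have hcc : Connected b f c c := Or.inl rfl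
    simp [hcc, Module.Basis.repr_self]
  · intro j _ hj
    by_cases h : Connected b f c j
    · simp [h, Module.Basis.repr_self, Finsupp.single_apply, hj]
    · simp [h]
  · simp

lemma apply_basis_mem_hatSpan (hm : 1 ≤ m) (b : Module.Basis I 𝔽 V)
    (f : MultilinearMap 𝔽 (fun _ : Fin (m + 1) => V) V) (i : I)
    (a : Fin (m + 1) → I) (k : Fin (m + 1)) (ha : Approx b f i (a k)) :
    f (fun s => b (a s)) ∈ hatSpan b f i := by
  by_cases hf : f (fun s => b (a s)) = 0
  · rw [hf]; exact Submodule.zero_mem _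
  set w := f (fun s => b (a s)) with hw
  have key : ∀ l ∈ (b.repr w).support, Approx b f i l := by
    intro l hl
    have hl' : b.repr w l ≠ 0 := Finsupp.mem_support_iff.1 hl
    refine ha.tail ?_
    by_cases hc : Connected b f (a k) l
    · exact Or.inl hc
    right
    have h01 : (0 : Fin (m + 1)) < 1 := by
      rw [Fin.lt_def, Fin.val_one']
      simp [Nat.mod_eq_of_lt (by omega : 1 < m + 1)]
    refine ⟨0, 1, h01, Or.inr ⟨fun s => b (a s), ?_, ?_, ?_⟩⟩
    · exact Submodule.subset_span ⟨a 0, connected_of_apply_ne_zero hm b f a hf k 0, rfl⟩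
    · exact Submodule.subset_span ⟨a 1, connected_of_apply_ne_zero hm b f a hf k 1, rfl⟩
    · intro h0
      apply hl'
      have := repr_projClass b f l w
      rw [h0] at this
      simpa using this.symm
  have : w ∈ Submodule.span 𝔽 (⇑b '' {j | Approx b f i j}) := by
    rw [Module.Basis.mem_span_image]
    intro l hl
    exact key l (by simpa using hl)
  exact this

/-- each `⌢V_{[e i]}` is strongly `f`-invariant. -/
theorem stmt7 (hm : 1 ≤ m) (b : Module.Basis I 𝔽 V)
    (f : MultilinearMap 𝔽 (fun _ : Fin (m + 1) => V) V) (i : I) :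
    StronglyInvariant f (hatSpan b f i) := by
  intro k v hvk
  have hexp : ∀ t, v t = ∑ j ∈ (b.repr (v t)).support, b.repr (v t) j • b j := by
    intro t
    conv_lhs => rw [← b.linearCombination_repr (v t)]
    rw [Finsupp.linearCombination_apply, Finsupp.sum]
  have hfv : f v = ∑ p ∈ Fintype.piFinset (fun t => (b.repr (v t)).support),
      f (fun t => b.repr (v t) (p t) • b (p t)) := by
    conv_lhs => rw [show v = fun t => ∑ j ∈ (b.repr (v t)).support,
      b.repr (v t) j • b j from funext hexp]
    exact f.map_sum_finset _ _
  rw [hfv]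
  refine Submodule.sum_mem _ fun p hp => ?_
  rw [show (fun t => b.repr (v t) (p t) • b (p t)) =
      fun t => b.repr (v t) (p t) • (fun s => b (p s)) t from rfl, f.map_smul_univ]
  refine Submodule.smul_mem _ _ (apply_basis_mem_hatSpan hm b f i p k ?_)
  have hsub : ↑(b.repr (v k)).support ⊆ {j | Approx b f i j} :=
    b.mem_span_image.1 hvk
  exact hsub (Finset.mem_coe.2 ((Fintype.mem_piFinset.1 hp) k))
end
end

section
/- Let V be a vector space over a field 𝔽, n ≥ 2, f an n-linear map on V, and ℬ a basis of V. If [V_{[e_i]}] ≠ [V_{[e_j]}] in ℱ/≈, then f(V, …, ⌢V_{[e_i]} in slot k₁, …, ⌢V_{[e_j]} in slot k₂, …, V) = 0 for all k₁, k₂ ∈ {1,…,n} with k₁ ≠ k₂; that is, ⌢V_{[e_i]} and ⌢V_{[e_j]} are f-orthogonal. -/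
/- Common setting: `V` is a vector space over a field `𝔽`, and `f` is an
`n`-linear map on `V` where `n = m + 1 ≥ 2` (i.e. `1 ≤ m`).  Tuples of
length `n - 1 = m` index the last arguments of the set-valued map `F`. -/

open scoped Classical

noncomputable section

variable {𝔽 V I : Type*}

variable [Field 𝔽] [AddCommGroup V] [Module 𝔽 V] {m : ℕ}

namespace Stmt8Aux

lemma mem_Fmap_iff (b : Module.Basis I 𝔽 V) (f : MultilinearMap 𝔽 (fun _ : Fin (m + 1) => V) V)
    {U : Set (Vstar V)} {ξ : Fin m → BSym I} {w : Vstar V} :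
    w ∈ Fmap b f U ξ ↔ ∃ u ∈ U, w ∈ Fmap b f {u} ξ := by
  unfold Fmap
  split_ifs <;>
      simp only [Set.mem_setOf_eq, Set.mem_singleton_iff, Set.mem_empty_iff_false] <;>
    [constructor; constructor; simp]
  · rintro ⟨k, σ, u, hu, hf⟩; exact ⟨u, hu, k, σ, u, rfl, hf⟩
  · rintro ⟨u, hu, k, σ, u', rfl, hf⟩; exact ⟨k, σ, u', hu, hf⟩
  · rintro ⟨k, σ, u, hu, hf⟩; exact ⟨u, hu, k, σ, u, rfl, hf⟩
  · rintro ⟨u, hu, k, σ, u', rfl, hf⟩; exact ⟨k, σ, u', hu, hf⟩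

lemma Fmap_symm (hm : 1 ≤ m) (b : Module.Basis I 𝔽 V)
    (f : MultilinearMap 𝔽 (fun _ : Fin (m + 1) => V) V)
    {u w : Vstar V} {ξ : Fin m → BSym I} (h : w ∈ Fmap b f {u} ξ) :
    u ∈ Fmap b f {w} (barSwap ∘ ξ) := by
  have t0 : Fin m := ⟨0, hm⟩
  unfold Fmap at h ⊢
  by_cases h1 : ∀ t, (ξ t).1 = false
  · rw [if_pos h1] at h
    rw [if_neg (by intro hc; have := hc t0; simp [barSwap, h1 t0] at this),
      if_pos (by intro t; simp [barSwap, h1 t])]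
    obtain ⟨k, σ, u', hu', hf⟩ := h
    rw [Set.mem_singleton_iff] at hu'; subst hu'
    exact ⟨k, σ, w, rfl, by simpa [barSwap] using hf⟩
  · rw [if_neg h1] at h
    by_cases h2 : ∀ t, (ξ t).1 = true
    · rw [if_pos h2] at h
      rw [if_pos (by intro t; simp [barSwap, h2 t])]
      obtain ⟨k, σ, u', hu', hf⟩ := h
      rw [Set.mem_singleton_iff] at hu'; subst hu'
      exact ⟨k, σ, w, rfl, by simpa [barSwap] using hf⟩
    · rw [if_neg h2] at h
      exact absurd h (Set.notMem_empty _)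

lemma iterF_append (b : Module.Basis I 𝔽 V) (f : MultilinearMap 𝔽 (fun _ : Fin (m + 1) => V) V)
    (L : List (Fin m → BSym I)) (Y : Fin m → BSym I) :
    ∀ U, iterF b f U (L ++ [Y]) = Fmap b f (iterF b f U L) Y := by
  induction L with
  | nil => intro U; rfl
  | cons X Xs ih => intro U; simp only [List.cons_append, iterF]; exact ih _

lemma mem_iterF_iff (b : Module.Basis I 𝔽 V) (f : MultilinearMap 𝔽 (fun _ : Fin (m + 1) => V) V)
    (L : List (Fin m → BSym I)) :
    ∀ (U : Set (Vstar V)) (w : Vstar V),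
      w ∈ iterF b f U L ↔ ∃ u ∈ U, w ∈ iterF b f {u} L := by
  induction L with
  | nil => intro U w; simp [iterF]
  | cons X Xs ih =>
    intro U w
    simp only [iterF]
    rw [ih (Fmap b f U X) w]
    constructor
    · rintro ⟨u', hu', hw⟩
      obtain ⟨u, hu, hu'2⟩ := (mem_Fmap_iff b f).1 hu'
      exact ⟨u, hu, (ih _ _).2 ⟨u', hu'2, hw⟩⟩
    · rintro ⟨u, hu, hw⟩
      obtain ⟨u', hu', hw'⟩ := (ih _ _).1 hw
      exact ⟨u', (mem_Fmap_iff b f).2 ⟨u, hu, hu'⟩, hw'⟩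

lemma iterF_reverse (hm : 1 ≤ m) (b : Module.Basis I 𝔽 V)
    (f : MultilinearMap 𝔽 (fun _ : Fin (m + 1) => V) V)
    (L : List (Fin m → BSym I)) :
    ∀ u w : Vstar V, w ∈ iterF b f {u} L →
      u ∈ iterF b f {w} (L.reverse.map fun ξ => barSwap ∘ ξ) := by
  induction L with
  | nil =>
    intro u w hw
    simp only [iterF, Set.mem_singleton_iff] at hw ⊢
    exact hw.symm
  | cons X Xs ih =>
    intro u w hw
    simp only [iterF] at hw
    obtain ⟨w', hw', hww⟩ := (mem_iterF_iff b f Xs _ _).1 hw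
    have h1 := ih w' w hww
    have h2 := Fmap_symm hm b f hw'
    have h3 : u ∈ Fmap b f (iterF b f {w} (Xs.reverse.map fun ξ => barSwap ∘ ξ))
        (barSwap ∘ X) :=
      (mem_Fmap_iff b f).2 ⟨w', h1, h2⟩
    rw [List.reverse_cons, List.map_append, List.map_cons, List.map_nil, iterF_append]
    exact h3

lemma connected_symm (hm : 1 ≤ m) (b : Module.Basis I 𝔽 V)
    (f : MultilinearMap 𝔽 (fun _ : Fin (m + 1) => V) V)
    {i j : I} (h : Connected b f i j) : Connected b f j i := by
  rcases h with rfl | ⟨X, hX, hmem⟩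
  · exact Or.inl rfl
  · exact Or.inr ⟨X.reverse.map fun ξ => barSwap ∘ ξ, by simpa using hX,
      iterF_reverse hm b f X _ _ hmem⟩

lemma approxStep_symm (b : Module.Basis I 𝔽 V) (f : MultilinearMap 𝔽 (fun _ : Fin (m + 1) => V) V)
    {c d : I} (h : ApproxStep b f c d) : ApproxStep b f d c := by
  obtain ⟨k₁, k₂, hk, h⟩ := h
  exact ⟨k₁, k₂, hk, h.symm⟩

lemma approx_symm (hm : 1 ≤ m) (b : Module.Basis I 𝔽 V)
    (f : MultilinearMap 𝔽 (fun _ : Fin (m + 1) => V) V)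
    {i j : I} (h : Approx b f i j) : Approx b f j i := by
  refine @Std.Symm.symm _ _ (@Relation.ReflTransGen.symmetric I
    (fun c d => Connected b f c d ∨ ApproxStep b f c d) ⟨?_⟩) _ _ h
  intro c d hcd
  rcases hcd with hc | hc
  · exact Or.inl (connected_symm hm b f hc)
  · exact Or.inr (approxStep_symm b f hc)

lemma connected_of_ne_zero (hm : 1 ≤ m) (b : Module.Basis I 𝔽 V)
    (f : MultilinearMap 𝔽 (fun _ : Fin (m + 1) => V) V)
    {k₁ k₂ : Fin (m + 1)} (hk : k₁ ≠ k₂) (r : Fin (m + 1) → I)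
    (hf : f (fun t => b (r t)) ≠ 0) :
    Connected b f (r k₁) (r k₂) := by
  have t0 : Fin m := ⟨0, hm⟩
  set w : Vstar V := ⟨f (fun t => b (r t)), hf⟩ with hwdef
  set ξ₁ : Fin m → BSym I := fun t => (false, r (k₁.succAbove t)) with hξ₁
  set ξ₂ : Fin m → BSym I := fun t => (true, r (k₂.succAbove t)) with hξ₂
  have hw1 : w ∈ Fmap b f {bstar b (r k₁)} ξ₁ := by
    unfold Fmap
    rw [if_pos (fun t => rfl)]
    refine ⟨k₁, 1, bstar b (r k₁), rfl, ?_⟩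
    show f (Fin.insertNth k₁ (b (r k₁)) fun t => b (r (k₁.succAbove t))) = w.1
    have : Fin.insertNth k₁ (b (r k₁)) (fun t => b (r (k₁.succAbove t)))
        = fun t => b (r t) := Fin.insertNth_self_removeNth k₁ (fun t => b (r t))
    rw [this]
  refine Or.inr ⟨[ξ₁, ξ₂], by simp, ?_⟩
  show bstar b (r k₂) ∈ Fmap b f (Fmap b f {bstar b (r k₁)} ξ₁) ξ₂
  unfold Fmap
  rw [if_neg (by intro hc; exact absurd (hc t0) (by simp [hξ₂])),
    if_pos (fun t => rfl)]
  refine ⟨k₂, 1, w, hw1, ?_⟩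
  show f (Fin.insertNth k₂ (b (r k₂)) fun t => b (r (k₂.succAbove t))) = w.1
  have : Fin.insertNth k₂ (b (r k₂)) (fun t => b (r (k₂.succAbove t)))
      = fun t => b (r t) := Fin.insertNth_self_removeNth k₂ (fun t => b (r t))
  rw [this]

lemma multilinear_zero_of_gen (f : MultilinearMap 𝔽 (fun _ : Fin (m + 1) => V) V)
    (S : Fin (m + 1) → Set V)
    (h : ∀ v : Fin (m + 1) → V, (∀ t, v t ∈ S t) → f v = 0) :
    ∀ v : Fin (m + 1) → V, (∀ t, v t ∈ Submodule.span 𝔽 (S t)) → f v = 0 := by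
  suffices H : ∀ s : Finset (Fin (m + 1)), ∀ v : Fin (m + 1) → V,
      (∀ t, v t ∈ Submodule.span 𝔽 (S t)) → (∀ t ∉ s, v t ∈ S t) → f v = 0 by
    intro v hv
    exact H Finset.univ v hv (fun t ht => absurd (Finset.mem_univ t) ht)
  intro s
  induction s using Finset.induction with
  | empty => intro v hv hv'; exact h v fun t => hv' t (by simp)
  | @insert a s ha ih =>
    intro v hv hv'
    have hsp : v a ∈ Submodule.span 𝔽 (S a) := hv a
    have key : ∀ x ∈ Submodule.span 𝔽 (S a), f (Function.update v a x) = 0 := by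
      intro x hx
      induction hx using Submodule.span_induction with
      | mem x hxS =>
        refine ih (Function.update v a x) ?_ ?_
        · intro t
          rcases eq_or_ne t a with rfl | ht
          · rw [Function.update_self]; exact Submodule.subset_span hxS
          · rw [Function.update_of_ne ht]; exact hv t
        · intro t hts
          rcases eq_or_ne t a with rfl | ht
          · rw [Function.update_self]; exact hxS
          · rw [Function.update_of_ne ht]
            exact hv' t (by simp [ht, hts])
      | zero => exact f.map_coord_zero a (by simp)
      | add x y hx hy ihx ihy => rw [f.map_update_add, ihx, ihy, add_zero]
      | smul c x hx ihx => rw [f.map_update_smul, ihx, smul_zero]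
    have := key (v a) hsp
    rwa [Function.update_eq_self] at this

end Stmt8Aux

/-- `⌢V_{[e i]}` and `⌢V_{[e j]}` are `f`-orthogonal for distinct `≈`-classes. -/
theorem stmt8 (hm : 1 ≤ m) (b : Module.Basis I 𝔽 V)
    (f : MultilinearMap 𝔽 (fun _ : Fin (m + 1) => V) V)
    (i j : I) (h : ¬ Approx b f i j) :
    FOrthogonal f (hatSpan b f i) (hatSpan b f j) := by
  intro k₁ k₂ hk v hv1 hv2
  classical
  set S : Fin (m + 1) → Set V := fun t =>
    if t = k₁ then ⇑b '' {p | Approx b f i p}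
    else if t = k₂ then ⇑b '' {p | Approx b f j p}
    else Set.range ⇑b with hS
  refine Stmt8Aux.multilinear_zero_of_gen f S ?_ v ?_
  · intro u hu
    by_contra hne
    have hu1 : u k₁ ∈ ⇑b '' {p | Approx b f i p} := by simpa [hS] using hu k₁
    have hu2 : u k₂ ∈ ⇑b '' {p | Approx b f j p} := by
      simpa [hS, Ne.symm hk] using hu k₂
    obtain ⟨p, hp, hup⟩ := hu1
    obtain ⟨q, hq, huq⟩ := hu2
    -- build an index function r with u = b ∘ r
    have hr : ∀ t, ∃ c : I, u t = b c := by
      intro t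
      rcases eq_or_ne t k₁ with rfl | h1
      · exact ⟨p, hup.symm⟩
      rcases eq_or_ne t k₂ with rfl | h2
      · exact ⟨q, huq.symm⟩
      · have := hu t
        simp only [hS, if_neg h1, if_neg h2, Set.mem_range] at this
        obtain ⟨c, hc⟩ := this
        exact ⟨c, hc.symm⟩
    choose r hrr using hr
    have hub : u = fun t => b (r t) := funext hrr
    have hrk₁ : r k₁ = p := b.injective (by rw [← hrr k₁, hup])
    have hrk₂ : r k₂ = q := b.injective (by rw [← hrr k₂, huq])
    have hfz : f (fun t => b (r t)) ≠ 0 := by rw [← hub]; exact hne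
    have hconn : Connected b f p q := by
      rw [← hrk₁, ← hrk₂]; exact Stmt8Aux.connected_of_ne_zero hm b f hk r hfz
    have hApq : Approx b f p q := Relation.ReflTransGen.single (Or.inl hconn)
    have : Approx b f i j :=
      ((hp.trans hApq).trans (Stmt8Aux.approx_symm hm b f hq))
    exact h this
  · intro t
    rcases eq_or_ne t k₁ with rfl | h1
    · have hSt : S t = ⇑b '' {p | Approx b f i p} := by simp [hS]
      rw [hSt]; exact hv1
    rcases eq_or_ne t k₂ with rfl | h2
    · have hSt : S t = ⇑b '' {p | Approx b f j p} := by simp [hS, Ne.symm hk]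
      rw [hSt]; exact hv2
    · have hSt : S t = Set.range ⇑b := by simp [hS, h1, h2]
      rw [hSt, b.span_eq]
      exact Submodule.mem_top
end
end

section
/- Let V be a vector space over a field 𝔽, n ≥ 2, f an n-linear map on V, ℬ a basis of V, and g : V → V a linear isomorphism satisfying f(g(ξ₁),…,g(ξ_n)) = g(f(ξ₁,…,ξ_n)) for all ξ₁,…,ξ_n ∈ ℬ. Then for every U ∈ 𝒫(V*) and all ξ₁,…,ξ_{n-1} ∈ ℬ one has g(F(U, ξ₁,…,ξ_{n-1})) = F′(g(U), g(ξ₁),…,g(ξ_{n-1})), where F′ is the map defined in the same way from f and the basis ℬ′ = {g(e_i) : e_i ∈ ℬ} and g(U) denotes the image set of U under g. -/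
/- Common setting: `V` is a vector space over a field `𝔽`, and `f` is an
`n`-linear map on `V` where `n = m + 1 ≥ 2` (i.e. `1 ≤ m`).  Tuples of
length `n - 1 = m` index the last arguments of the set-valued map `F`. -/

open scoped Classical

noncomputable section

variable {𝔽 V I : Type*}

variable [Field 𝔽] [AddCommGroup V] [Module 𝔽 V] {m : ℕ}

lemma update_insertNth_aux (k : Fin (m + 1)) (y u : V) (w : Fin m → V) :
    Function.update (Fin.insertNth (α := fun _ => V) k y w) k u =
      Fin.insertNth (α := fun _ => V) k u w := by
  ext s
  rcases eq_or_ne s k with rfl | h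
  · simp
  · obtain ⟨t, rfl⟩ := Fin.exists_succAbove_eq h
    simp [Function.update_of_ne (k.succAbove_ne t)]

lemma key_comm (b : Module.Basis I 𝔽 V)
    (f : MultilinearMap 𝔽 (fun _ : Fin (m + 1) => V) V) (g : V ≃ₗ[𝔽] V)
    (hg : ∀ ξ : Fin (m + 1) → I,
      f (fun k => g (b (ξ k))) = g (f (fun k => b (ξ k))))
    (k : Fin (m + 1)) (η : Fin m → I) (u : V) :
    g (f (Fin.insertNth k u fun t => b (η t))) =
      f (Fin.insertNth k (g u) fun t => g (b (η t))) := by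
  set w : Fin m → V := fun t => b (η t)
  set w' : Fin m → V := fun t => g (b (η t))
  have hL : ∀ x : V, f (Fin.insertNth k x w) =
      (f.toLinearMap (Fin.insertNth k 0 w) k) x := by
    intro x
    simp only [MultilinearMap.toLinearMap_apply]
    rw [update_insertNth_aux]
  have hL' : ∀ x : V, f (Fin.insertNth k x w') =
      (f.toLinearMap (Fin.insertNth k 0 w') k) x := by
    intro x
    simp only [MultilinearMap.toLinearMap_apply]
    rw [update_insertNth_aux]
  have hbasis : ∀ j : I, g (f (Fin.insertNth k (b j) w)) =
      f (Fin.insertNth k (g (b j)) w') := by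
    intro j
    have h1 : Fin.insertNth k (b j) w = fun s => b (Fin.insertNth (α := fun _ => I) k j η s) := by
      ext s
      rcases eq_or_ne s k with rfl | h
      · simp
      · obtain ⟨t, rfl⟩ := Fin.exists_succAbove_eq h
        simp [w]
    have h2 : Fin.insertNth k (g (b j)) w' = fun s => g (b (Fin.insertNth (α := fun _ => I) k j η s)) := by
      ext s
      rcases eq_or_ne s k with rfl | h
      · simp
      · obtain ⟨t, rfl⟩ := Fin.exists_succAbove_eq h
        simp [w']
    rw [h1, h2, hg (Fin.insertNth (α := fun _ => I) k j η)]
  -- both sides are linear maps in u agreeing on the basis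
  have hmaps : (g.toLinearMap ∘ₗ f.toLinearMap (Fin.insertNth k 0 w) k) =
      ((f.toLinearMap (Fin.insertNth k 0 w') k) ∘ₗ g.toLinearMap) := by
    apply b.ext
    intro j
    have := hbasis j
    rw [hL, hL'] at this
    simpa using this
  have := DFunLike.congr_fun hmaps u
  rw [hL, hL']
  simpa using this

/-- Lemma, unbarred case: `g(F(U,ξ₁,…,ξ_{n-1})) = F'(g(U),g(ξ₁),…,g(ξ_{n-1}))`. -/
theorem stmt10 (hm : 1 ≤ m) (b : Module.Basis I 𝔽 V)
    (f : MultilinearMap 𝔽 (fun _ : Fin (m + 1) => V) V) (g : V ≃ₗ[𝔽] V)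
    (hg : ∀ ξ : Fin (m + 1) → I,
      f (fun k => g (b (ξ k))) = g (f (fun k => b (ξ k))))
    (U : Set (Vstar V)) (ξ : Fin m → I) :
    (fun u : Vstar V => (⟨g u.1, fun h0 => u.2 (g.injective (by rw [h0, map_zero]))⟩ : Vstar V)) ''
        Fmap b f U (fun t => (false, ξ t)) =
      Fmap (b.map g) f
        ((fun u : Vstar V => (⟨g u.1, fun h0 => u.2 (g.injective (by rw [h0, map_zero]))⟩ : Vstar V)) '' U)
        (fun t => (false, ξ t)) := by
  set G : Vstar V → Vstar V := fun u : Vstar V =>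
    (⟨g u.1, fun h0 => u.2 (g.injective (by rw [h0, map_zero]))⟩ : Vstar V) with hG
  have hc : ∀ t : Fin m, ((fun t => ((false : Bool), ξ t)) t).1 = false := fun _ => rfl
  unfold Fmap
  rw [if_pos hc, if_pos hc]
  ext w
  constructor
  · rintro ⟨v, ⟨k, σ, u, hu, hv⟩, rfl⟩
    refine ⟨k, σ, G u, ⟨u, hu, rfl⟩, ?_⟩
    have := key_comm b f g hg k (fun t => ξ (σ t)) u.1
    simp only [Module.Basis.map_apply]
    rw [← this, hv]
  · rintro ⟨k, σ, gu, ⟨u, hu, rfl⟩, hv⟩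
    have hcomm := key_comm b f g hg k (fun t => ξ (σ t)) u.1
    refine ⟨⟨f (Fin.insertNth k u.1 fun t => b (ξ (σ t))), ?_⟩,
      ⟨k, σ, u, hu, rfl⟩, ?_⟩
    · intro h0
      apply w.2
      have : g.toLinearMap (f (Fin.insertNth k u.1 fun t => b (ξ (σ t)))) = w.1 := by
        simp only [LinearEquiv.coe_coe]
        rw [hcomm, ← hv]
        simp [Module.Basis.map_apply]
        rfl
      rw [h0, map_zero] at this
      exact this.symm
    · apply Subtype.ext
      simp only [hG]
      rw [hcomm, ← hv]
      simp [Module.Basis.map_apply]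
      rfl
end
end

section
/- Let V be a vector space over a field 𝔽, n ≥ 2, f an n-linear map on V, ℬ a basis of V, and g : V → V a linear isomorphism satisfying f(g(ξ₁),…,g(ξ_n)) = g(f(ξ₁,…,ξ_n)) for all ξ₁,…,ξ_n ∈ ℬ. Then for every U ∈ 𝒫(V*) and all ξ₁,…,ξ_{n-1} ∈ ℬ one has g(F(U, ξ̄₁,…,ξ̄_{n-1})) = F′(g(U), bar of g(ξ₁),…, bar of g(ξ_{n-1})), where F′ is the map defined in the same way from f and the basis ℬ′ = {g(e_i) : e_i ∈ ℬ}, the symbol bar of g(ξ) is the formal bar symbol over ℬ′ corresponding to g(ξ), and g(U) is the image set of U under g. -/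
/- Common setting: `V` is a vector space over a field `𝔽`, and `f` is an
`n`-linear map on `V` where `n = m + 1 ≥ 2` (i.e. `1 ≤ m`).  Tuples of
length `n - 1 = m` index the last arguments of the set-valued map `F`. -/

open scoped Classical

noncomputable section

variable {𝔽 V I : Type*}

variable [Field 𝔽] [AddCommGroup V] [Module 𝔽 V] {m : ℕ}

lemma comp_insertNth_aux {α β : Type*} {m : ℕ} (g : α → β) (k : Fin (m + 1)) (x : α)
    (p : Fin m → α) :
    (fun j => g (Fin.insertNth (α := fun _ => α) k x p j)) =
      Fin.insertNth k (g x) (fun t => g (p t)) := by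
  funext j
  refine Fin.succAboveCases k ?_ ?_ j <;> simp

lemma hfg_aux {𝔽 V I : Type*} [Field 𝔽] [AddCommGroup V] [Module 𝔽 V] {m : ℕ}
    (b : Module.Basis I 𝔽 V) (f : MultilinearMap 𝔽 (fun _ : Fin (m + 1) => V) V) (g : V ≃ₗ[𝔽] V)
    (hg : ∀ ξ : Fin (m + 1) → I,
      f (fun k => g (b (ξ k))) = g (f (fun k => b (ξ k))))
    (v : Fin (m + 1) → V) : f (fun k => g (v k)) = g (f v) := by
  have : f.compLinearMap (fun _ => (g : V →ₗ[𝔽] V)) =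
      (g : V →ₗ[𝔽] V).compMultilinearMap f := by
    refine Module.Basis.ext_multilinear (fun _ => b) fun ξ => ?_
    simpa using hg ξ
  simpa using congrFun (congrArg (fun F : MultilinearMap 𝔽 (fun _ : Fin (m + 1) => V) V =>
    F.toFun) this) v

/-- Lemma, barred case. -/
theorem stmt11 (hm : 1 ≤ m) (b : Module.Basis I 𝔽 V)
    (f : MultilinearMap 𝔽 (fun _ : Fin (m + 1) => V) V) (g : V ≃ₗ[𝔽] V)
    (hg : ∀ ξ : Fin (m + 1) → I,
      f (fun k => g (b (ξ k))) = g (f (fun k => b (ξ k))))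
    (U : Set (Vstar V)) (ξ : Fin m → I) :
    (fun u : Vstar V => (⟨g u.1, fun h0 => u.2 (g.injective (by rw [h0, map_zero]))⟩ : Vstar V)) ''
        Fmap b f U (fun t => (true, ξ t)) =
      Fmap (b.map g) f
        ((fun u : Vstar V => (⟨g u.1, fun h0 => u.2 (g.injective (by rw [h0, map_zero]))⟩ : Vstar V)) '' U)
        (fun t => (true, ξ t)) := by
  have hfg := hfg_aux b f g hg
  have hne : ¬ (∀ t : Fin m, (true : Bool) = false) := fun h => by
    simpa using h ⟨0, hm⟩
  simp only [Fmap, hne, if_false, if_neg, if_pos, if_true, Module.Basis.map_apply]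
  rw [if_pos (fun _ => trivial), if_pos (fun _ => trivial)]
  ext w
  constructor
  · rintro ⟨w', ⟨k, σ, u, hu, heq⟩, rfl⟩
    refine ⟨k, σ, _, ⟨u, hu, rfl⟩, ?_⟩
    have : f (fun j => g (Fin.insertNth (α := fun _ => V) k w'.1 (fun t => b (ξ (σ t))) j)) = g u.1 := by
      rw [hfg, heq]
    rwa [comp_insertNth_aux] at this
  · rintro ⟨k, σ, u', ⟨u, hu, rfl⟩, heq⟩
    refine ⟨⟨g.symm w.1, fun h0 => w.2 (by
      have := congrArg g h0; simpa using this)⟩, ⟨k, σ, u, hu, ?_⟩, ?_⟩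
    · apply g.injective
      rw [← hfg, comp_insertNth_aux]
      simpa using heq
    · exact Subtype.ext (by simp)
end
end

section
/- Let V be a vector space over a field 𝔽, n ≥ 2, f an n-linear map on V, and ℬ = {e_i : i ∈ I} a basis of V. Suppose g : V → V is a linear isomorphism satisfying f(g(ξ₁),…,g(ξ_n)) = g(f(ξ₁,…,ξ_n)) for all ξ₁,…,ξ_n ∈ ℬ. Then the decompositions Γ : V = ⊕_{[V_{[e_i]}] ∈ ℱ/≈} ⌢V_{[e_i]} and Γ′ : V = ⊕_{[V_{[g(e_i)]}] ∈ ℱ′/≈} ⌢V_{[g(e_i)]}, obtained by applying the decomposition theorem to the bases ℬ and ℬ′ = {g(e_i) : i ∈ I} respectively, are isomorphic. -/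
/- Common setting: `V` is a vector space over a field `𝔽`, and `f` is an
`n`-linear map on `V` where `n = m + 1 ≥ 2` (i.e. `1 ≤ m`).  Tuples of
length `n - 1 = m` index the last arguments of the set-valued map `F`. -/

open scoped Classical

noncomputable section

variable {𝔽 V I : Type*}

variable [Field 𝔽] [AddCommGroup V] [Module 𝔽 V] {m : ℕ}

namespace Stmt12Aux

variable (f : MultilinearMap 𝔽 (fun _ : Fin (m + 1) => V) V) (g : V ≃ₗ[𝔽] V)

/-- The map induced by `g` on `V*`. -/
def gstar (g : V ≃ₗ[𝔽] V) (u : Vstar V) : Vstar V :=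
  ⟨g u.1, by simp [u.2]⟩

lemma gstar_inj : Function.Injective (gstar (V := V) g) := by
  intro u v h
  exact Subtype.ext (g.injective (congrArg Subtype.val h))

lemma comm_all (b : Module.Basis I 𝔽 V)
    (hg : ∀ ξ : Fin (m + 1) → I,
      f (fun k => g (b (ξ k))) = g (f (fun k => b (ξ k)))) :
    ∀ v : Fin (m + 1) → V, f (fun k => g (v k)) = g (f v) := by
  have h : f.compLinearMap (fun _ => (g : V →ₗ[𝔽] V))
      = (g : V →ₗ[𝔽] V).compMultilinearMap f :=
    Module.Basis.ext_multilinear (fun _ => b) fun ξ => hg ξ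
  intro v
  exact congrFun (congrArg DFunLike.coe h) v

lemma insertNth_g (k : Fin (m + 1)) (u : V) (v : Fin m → V) :
    (fun j => g ((Fin.insertNth k u v : Fin (m + 1) → V) j))
      = Fin.insertNth k (g u) (fun t => g (v t)) := by
  funext j
  rcases eq_or_ne j k with rfl | hj
  · simp
  · obtain ⟨t, ht⟩ := Fin.exists_succAbove_eq hj
    rw [← ht]
    simp

variable {f g} in
lemma Fmap_map (b : Module.Basis I 𝔽 V)
    (hc : ∀ v : Fin (m + 1) → V, f (fun k => g (v k)) = g (f v))
    (U : Set (Vstar V)) (ξ : Fin m → BSym I) :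
    Fmap (b.map g) f (gstar g '' U) ξ = gstar g '' Fmap b f U ξ := by
  unfold Fmap
  split_ifs with h1 h2
  · ext w
    simp only [Set.mem_setOf_eq, Set.mem_image, Module.Basis.map_apply]
    constructor
    · rintro ⟨k, σ, u, ⟨u₀, hu₀, rfl⟩, hf⟩
      simp only [gstar] at hf
      rw [← insertNth_g, hc] at hf
      exact ⟨⟨f (Fin.insertNth k u₀.1 fun t => b (ξ (σ t)).2),
          fun h0 => w.2 (by rw [← hf, h0, map_zero])⟩,
        ⟨k, σ, u₀, hu₀, rfl⟩, Subtype.ext hf⟩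
    · rintro ⟨w₀, ⟨k, σ, u₀, hu₀, hf⟩, rfl⟩
      refine ⟨k, σ, gstar g u₀, ⟨u₀, hu₀, rfl⟩, ?_⟩
      simp only [gstar]
      rw [← insertNth_g, hc, hf]
  · ext w
    simp only [Set.mem_setOf_eq, Set.mem_image, Module.Basis.map_apply]
    constructor
    · rintro ⟨k, σ, u, ⟨u₀, hu₀, rfl⟩, hf⟩
      simp only [gstar] at hf
      refine ⟨⟨g.symm w.1, fun h0 => w.2 (by simpa using congrArg g h0)⟩,
        ⟨k, σ, u₀, hu₀, ?_⟩, Subtype.ext (by simp [gstar])⟩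
      apply g.injective
      rw [← hc, insertNth_g]
      simpa using hf
    · rintro ⟨w₀, ⟨k, σ, u₀, hu₀, hf⟩, rfl⟩
      refine ⟨k, σ, gstar g u₀, ⟨u₀, hu₀, rfl⟩, ?_⟩
      simp only [gstar]
      rw [← insertNth_g, hc, hf]
  · simp

variable {f g} in
lemma iterF_map (b : Module.Basis I 𝔽 V)
    (hc : ∀ v : Fin (m + 1) → V, f (fun k => g (v k)) = g (f v))
    (U : Set (Vstar V)) (X : List (Fin m → BSym I)) :
    iterF (b.map g) f (gstar g '' U) X = gstar g '' iterF b f U X := by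
  induction X generalizing U with
  | nil => rfl
  | cons ξ Xs ih =>
    show iterF (b.map g) f (Fmap (b.map g) f (gstar g '' U) ξ) Xs = _
    rw [Fmap_map b hc]
    exact ih _

variable {f g} in
lemma connected_map (b : Module.Basis I 𝔽 V)
    (hc : ∀ v : Fin (m + 1) → V, f (fun k => g (v k)) = g (f v)) (i j : I) :
    Connected (b.map g) f i j ↔ Connected b f i j := by
  unfold Connected IsConnection
  have hb : ∀ i : I, bstar (b.map g) i = gstar g (bstar b i) := fun i =>
    Subtype.ext (by simp [bstar, gstar])
  constructor
  · rintro (rfl | ⟨X, hX, hmem⟩)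
    · exact Or.inl rfl
    · refine Or.inr ⟨X, hX, ?_⟩
      rw [hb i, ← Set.image_singleton, iterF_map b hc, hb j] at hmem
      obtain ⟨w₀, hw₀, hw⟩ := hmem
      rwa [← gstar_inj g hw]
  · rintro (rfl | ⟨X, hX, hmem⟩)
    · exact Or.inl rfl
    · refine Or.inr ⟨X, hX, ?_⟩
      rw [hb i, ← Set.image_singleton, iterF_map b hc, hb j]
      exact ⟨_, hmem, rfl⟩

variable {f g} in
lemma classSpan_map (b : Module.Basis I 𝔽 V)
    (hc : ∀ v : Fin (m + 1) → V, f (fun k => g (v k)) = g (f v)) (i : I) :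
    classSpan (b.map g) f i = Submodule.map (g : V →ₗ[𝔽] V) (classSpan b f i) := by
  unfold classSpan
  rw [Submodule.map_span]
  congr 1
  have : {j | Connected (b.map g) f i j} = {j | Connected b f i j} := by
    ext j; exact connected_map b hc i j
  rw [this, ← Set.image_comp]
  rfl

variable {f g} in
lemma projClass_map (b : Module.Basis I 𝔽 V)
    (hc : ∀ v : Fin (m + 1) → V, f (fun k => g (v k)) = g (f v)) (c : I) (x : V) :
    projClass (b.map g) f c (g x) = g (projClass b f c x) := by
  have h : (projClass (b.map g) f c).comp (g : V →ₗ[𝔽] V)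
      = (g : V →ₗ[𝔽] V).comp (projClass b f c) := by
    apply b.ext
    intro j
    simp only [LinearMap.comp_apply, LinearEquiv.coe_coe]
    have hb : g (b j) = (b.map g) j := by simp
    rw [hb]
    unfold projClass
    rw [Module.Basis.constr_basis, Module.Basis.constr_basis]
    rw [connected_map b hc]
    split_ifs
    · simp
    · simp
  exact congrFun (congrArg DFunLike.coe h) x

variable {f g} in
lemma approxStep_map (b : Module.Basis I 𝔽 V)
    (hc : ∀ v : Fin (m + 1) → V, f (fun k => g (v k)) = g (f v)) (c d : I) :
    ApproxStep (b.map g) f c d ↔ ApproxStep b f c d := by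
  unfold ApproxStep
  have key : ∀ c d : I, ∀ k₁ k₂ : Fin (m + 1),
      (∃ v : Fin (m + 1) → V, v k₁ ∈ classSpan (b.map g) f d ∧
        v k₂ ∈ classSpan (b.map g) f d ∧ projClass (b.map g) f c (f v) ≠ 0) ↔
      (∃ v : Fin (m + 1) → V, v k₁ ∈ classSpan b f d ∧ v k₂ ∈ classSpan b f d ∧
        projClass b f c (f v) ≠ 0) := by
    intro c d k₁ k₂
    constructor
    · rintro ⟨v, h1, h2, h3⟩
      refine ⟨fun t => g.symm (v t), ?_, ?_, ?_⟩
      · rw [classSpan_map b hc] at h1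
        obtain ⟨y, hy, hyv⟩ := h1
        simpa [← hyv] using hy
      · rw [classSpan_map b hc] at h2
        obtain ⟨y, hy, hyv⟩ := h2
        simpa [← hyv] using hy
      · intro h0
        apply h3
        have hv : v = fun t => g (g.symm (v t)) := by funext t; simp
        rw [hv, hc, projClass_map b hc, h0, map_zero]
    · rintro ⟨v, h1, h2, h3⟩
      refine ⟨fun t => g (v t), ?_, ?_, ?_⟩
      · rw [classSpan_map b hc]; exact ⟨v k₁, h1, rfl⟩
      · rw [classSpan_map b hc]; exact ⟨v k₂, h2, rfl⟩
      · rw [hc, projClass_map b hc]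
        simpa using h3
  constructor
  · rintro ⟨k₁, k₂, hk, h | h⟩
    · exact ⟨k₁, k₂, hk, Or.inl ((key c d k₁ k₂).mp h)⟩
    · exact ⟨k₁, k₂, hk, Or.inr ((key d c k₁ k₂).mp h)⟩
  · rintro ⟨k₁, k₂, hk, h | h⟩
    · exact ⟨k₁, k₂, hk, Or.inl ((key c d k₁ k₂).mpr h)⟩
    · exact ⟨k₁, k₂, hk, Or.inr ((key d c k₁ k₂).mpr h)⟩

variable {f g} in
lemma hatSpan_map (b : Module.Basis I 𝔽 V)
    (hc : ∀ v : Fin (m + 1) → V, f (fun k => g (v k)) = g (f v)) (i : I) :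
    hatSpan (b.map g) f i = Submodule.map (g : V →ₗ[𝔽] V) (hatSpan b f i) := by
  unfold hatSpan
  rw [Submodule.map_span]
  congr 1
  have : {j | Approx (b.map g) f i j} = {j | Approx b f i j} := by
    ext j
    unfold Approx
    constructor
    · exact Relation.ReflTransGen.mono (fun c d h => by
        rcases h with h | h
        · exact Or.inl ((connected_map b hc c d).mp h)
        · exact Or.inr ((approxStep_map b hc c d).mp h)) i j
    · exact Relation.ReflTransGen.mono (fun c d h => by
        rcases h with h | h
        · exact Or.inl ((connected_map b hc c d).mpr h)
        · exact Or.inr ((approxStep_map b hc c d).mpr h)) i j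
  rw [this, ← Set.image_comp]
  rfl

end Stmt12Aux

/-- a linear automorphism commuting with `f` on a basis induces
isomorphic decompositions. -/
theorem stmt12 (hm : 1 ≤ m) (b : Module.Basis I 𝔽 V)
    (f : MultilinearMap 𝔽 (fun _ : Fin (m + 1) => V) V) (g : V ≃ₗ[𝔽] V)
    (hg : ∀ ξ : Fin (m + 1) → I,
      f (fun k => g (b (ξ k))) = g (f (fun k => b (ξ k)))) :
    IsoDecomp f {W | ∃ i, W = hatSpan b f i} {W | ∃ i, W = hatSpan (b.map g) f i} := by
  have hc := Stmt12Aux.comm_all f g b hg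
  refine ⟨g, hc, ?_⟩
  ext W
  simp only [Set.mem_image, Set.mem_setOf_eq]
  constructor
  · rintro ⟨W₀, ⟨i, rfl⟩, rfl⟩
    exact ⟨i, (Stmt12Aux.hatSpan_map b hc i).symm⟩
  · rintro ⟨i, rfl⟩
    exact ⟨hatSpan b f i, ⟨i, rfl⟩, (Stmt12Aux.hatSpan_map b hc i).symm⟩
end
end

section
/- Let V be a vector space over a field 𝔽, n ≥ 2, f an n-linear map on V, and fix two bases ℬ = {e_i : i ∈ I} and ℬ′ = {u_i : i ∈ I} of V. Suppose there exists a bijection μ : I → I such that the linear isomorphism g : V → V determined by g(e_i) := u_{μ(i)} for all i ∈ I satisfies f(g(v₁),…, u_{μ(i)} in slot k₁, …, u_{μ(j)} in slot k₂, …, g(v_{n-2})) = g(f(v₁,…, e_i in slot k₁, …, e_j in slot k₂, …, v_{n-2})) for all i, j ∈ I, all k₁, k₂ ∈ {1,…,n} with k₁ < k₂, and all v₁,…,v_{n-2} ∈ V. Then the decompositions Γ : V = ⊕_{[V_{[e_i]}] ∈ ℱ/≈} ⌢V_{[e_i]} and Γ′ : V = ⊕_{[V_{[u_i]}] ∈ ℱ′/≈}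 ⌢V_{[u_i]}, obtained by applying the decomposition theorem to ℬ and ℬ′ respectively, are isomorphic. -/
/- Common setting: `V` is a vector space over a field `𝔽`, and `f` is an
`n`-linear map on `V` where `n = m + 1 ≥ 2` (i.e. `1 ≤ m`).  Tuples of
length `n - 1 = m` index the last arguments of the set-valued map `F`. -/

open scoped Classical

noncomputable section

variable {𝔽 V I : Type*}

variable [Field 𝔽] [AddCommGroup V] [Module 𝔽 V] {m : ℕ}

/-! ### Auxiliary lemmas for Statement 14 -/

section Stmt14Aux

/-- Composing with a function commutes with `Fin.insertNth`. -/
lemma comp_insertNth' (g : V → V) (k : Fin (m + 1)) (x : V) (p : Fin m → V) :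
    (fun t => g (Fin.insertNth (α := fun _ => V) k x p t)) =
      Fin.insertNth k (g x) (fun t => g (p t)) := by
  funext t
  rcases eq_or_ne t k with rfl | h
  · simp
  · obtain ⟨j, rfl⟩ := Fin.exists_succAbove_eq h
    rw [Fin.insertNth_apply_succAbove, Fin.insertNth_apply_succAbove]

/-- The map on `V*` induced by a linear automorphism. -/
def mapVs (g : V ≃ₗ[𝔽] V) (u : Vstar V) : Vstar V :=
  ⟨g u.1, fun h => u.2 (g.map_eq_zero_iff.1 h)⟩

lemma mapVs_injective (g : V ≃ₗ[𝔽] V) : Function.Injective (mapVs g) := by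
  intro u v h
  exact Subtype.ext (g.injective (congrArg Subtype.val h))

lemma mapVs_surjective (g : V ≃ₗ[𝔽] V) : Function.Surjective (mapVs g) := by
  intro w
  refine ⟨mapVs g.symm w, Subtype.ext ?_⟩
  simp [mapVs]

/-- Translation of the symbols in `ℬ ∪̇ ℬ̄` along `μ`. -/
def trSym (μ : I ≃ I) (s : BSym I) : BSym I := (s.1, μ s.2)

variable (b b' : Module.Basis I 𝔽 V) (f : MultilinearMap 𝔽 (fun _ : Fin (m + 1) => V) V)
  (μ : I ≃ I) (g : V ≃ₗ[𝔽] V)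

lemma f_insert_map (hf : ∀ v : Fin (m + 1) → V, f (fun k => g (v k)) = g (f v))
    (k : Fin (m + 1)) (x : V) (p : Fin m → V) :
    f (Fin.insertNth k (g x) (fun t => g (p t))) = g (f (Fin.insertNth k x p)) := by
  rw [← comp_insertNth' g k x p]
  exact hf _

lemma mem_Fmap_map (hb : ∀ i, g (b i) = b' (μ i))
    (hf : ∀ v : Fin (m + 1) → V, f (fun k => g (v k)) = g (f v))
    (U : Set (Vstar V)) (ξ : Fin m → BSym I) (w : Vstar V) :
    mapVs g w ∈ Fmap b' f (mapVs g '' U) (fun t => trSym μ (ξ t)) ↔ w ∈ Fmap b f U ξ := by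
  have key : ∀ (k : Fin (m + 1)) (σ : Equiv.Perm (Fin m)) (x : V),
      f (Fin.insertNth k (g x) fun t => b' ((trSym μ (ξ (σ t))).2)) =
        g (f (Fin.insertNth k x fun t => b (ξ (σ t)).2)) := by
    intro k σ x
    have h1 : (fun t => b' ((trSym μ (ξ (σ t))).2)) = fun t => g (b ((ξ (σ t)).2)) := by
      funext t; exact (hb _).symm
    rw [h1]
    exact f_insert_map f g hf k x _
  simp only [Fmap]
  by_cases h1 : ∀ t, (ξ t).1 = false
  · rw [if_pos (show ∀ t, (trSym μ (ξ t)).1 = false from h1), if_pos h1]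
    simp only [Set.mem_setOf_eq, trSym]
    constructor
    · rintro ⟨k, σ, u', ⟨u, hu, rfl⟩, hEq⟩
      have hEq' : g (f (Fin.insertNth k u.1 fun t => b (ξ (σ t)).2)) = g w.1 :=
        (key k σ u.1).symm.trans hEq
      exact ⟨k, σ, u, hu, g.injective hEq'⟩
    · rintro ⟨k, σ, u, hu, hEq⟩
      exact ⟨k, σ, mapVs g u, ⟨u, hu, rfl⟩, (key k σ u.1).trans (congrArg g hEq)⟩
  · rw [if_neg (show ¬∀ t, (trSym μ (ξ t)).1 = false from h1), if_neg h1]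
    by_cases h2 : ∀ t, (ξ t).1 = true
    · rw [if_pos (show ∀ t, (trSym μ (ξ t)).1 = true from h2), if_pos h2]
      simp only [Set.mem_setOf_eq, trSym]
      constructor
      · rintro ⟨k, σ, u', ⟨u, hu, rfl⟩, hEq⟩
        have hEq' : g (f (Fin.insertNth k w.1 fun t => b (ξ (σ t)).2)) = g u.1 :=
          (key k σ w.1).symm.trans hEq
        exact ⟨k, σ, u, hu, g.injective hEq'⟩
      · rintro ⟨k, σ, u, hu, hEq⟩
        exact ⟨k, σ, mapVs g u, ⟨u, hu, rfl⟩, (key k σ w.1).trans (congrArg g hEq)⟩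
    · rw [if_neg (show ¬∀ t, (trSym μ (ξ t)).1 = true from h2), if_neg h2]
      simp

lemma Fmap_map (hb : ∀ i, g (b i) = b' (μ i))
    (hf : ∀ v : Fin (m + 1) → V, f (fun k => g (v k)) = g (f v))
    (U : Set (Vstar V)) (ξ : Fin m → BSym I) :
    Fmap b' f (mapVs g '' U) (fun t => trSym μ (ξ t)) = mapVs g '' Fmap b f U ξ := by
  ext w'
  obtain ⟨w, rfl⟩ := mapVs_surjective g w'
  rw [mem_Fmap_map b b' f μ g hb hf U ξ w,
    (mapVs_injective g).mem_set_image]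

lemma iterF_map (hb : ∀ i, g (b i) = b' (μ i))
    (hf : ∀ v : Fin (m + 1) → V, f (fun k => g (v k)) = g (f v))
    (U : Set (Vstar V)) (X : List (Fin m → BSym I)) :
    iterF b' f (mapVs g '' U) (X.map (fun ξ t => trSym μ (ξ t))) = mapVs g '' iterF b f U X := by
  induction X generalizing U with
  | nil => simp [iterF]
  | cons ξ Xs ih =>
    simp only [List.map_cons, iterF]
    rw [Fmap_map b b' f μ g hb hf U ξ]
    exact ih _

lemma connected_map (hb : ∀ i, g (b i) = b' (μ i))
    (hf : ∀ v : Fin (m + 1) → V, f (fun k => g (v k)) = g (f v))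
    {i j : I} (h : Connected b f i j) : Connected b' f (μ i) (μ j) := by
  rcases h with rfl | ⟨X, hX, hmem⟩
  · exact Or.inl rfl
  · refine Or.inr ⟨X.map (fun ξ t => trSym μ (ξ t)), by simpa using hX, ?_⟩
    have hsingle : mapVs g '' {bstar b i} = {bstar b' (μ i)} := by
      rw [Set.image_singleton]
      congr 1
      exact Subtype.ext (hb i)
    rw [← hsingle, iterF_map b b' f μ g hb hf]
    exact ⟨bstar b j, hmem, Subtype.ext (hb j)⟩

lemma hb_symm (hb : ∀ i, g (b i) = b' (μ i)) :
    ∀ i, g.symm (b' i) = b (μ.symm i) := by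
  intro i
  apply g.injective
  rw [g.apply_symm_apply, hb (μ.symm i), μ.apply_symm_apply]

lemma hf_symm (hf : ∀ v : Fin (m + 1) → V, f (fun k => g (v k)) = g (f v)) :
    ∀ v : Fin (m + 1) → V, f (fun k => g.symm (v k)) = g.symm (f v) := by
  intro v
  apply g.injective
  rw [g.apply_symm_apply, ← hf (fun k => g.symm (v k))]
  congr 1
  funext k
  rw [g.apply_symm_apply]

lemma connected_iff (hb : ∀ i, g (b i) = b' (μ i))
    (hf : ∀ v : Fin (m + 1) → V, f (fun k => g (v k)) = g (f v))
    (i j : I) : Connected b f i j ↔ Connected b' f (μ i) (μ j) := by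
  constructor
  · exact connected_map b b' f μ g hb hf
  · intro h
    have := connected_map b' b f μ.symm g.symm (hb_symm b b' μ g hb)
      (hf_symm f g hf) h
    simpa using this

lemma classSpan_map (hb : ∀ i, g (b i) = b' (μ i))
    (hf : ∀ v : Fin (m + 1) → V, f (fun k => g (v k)) = g (f v)) (i : I) :
    Submodule.map (g : V →ₗ[𝔽] V) (classSpan b f i) = classSpan b' f (μ i) := by
  rw [classSpan, Submodule.map_span, classSpan]
  congr 1
  rw [← Set.image_comp]
  ext x
  constructor
  · rintro ⟨j, hj, rfl⟩
    exact ⟨μ j, (connected_iff b b' f μ g hb hf i j).1 hj, (hb j).symm⟩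
  · rintro ⟨j', hj', rfl⟩
    refine ⟨μ.symm j', ?_, ?_⟩
    · have h2 := (connected_iff b b' f μ g hb hf i (μ.symm j')).2
      simp only [μ.apply_symm_apply] at h2
      exact h2 hj'
    · show g (b (μ.symm j')) = b' j'
      rw [hb (μ.symm j'), μ.apply_symm_apply]

lemma projClass_comm (hb : ∀ i, g (b i) = b' (μ i))
    (hf : ∀ v : Fin (m + 1) → V, f (fun k => g (v k)) = g (f v)) (c : I) (x : V) :
    g (projClass b f c x) = projClass b' f (μ c) (g x) := by
  have key : ((g : V →ₗ[𝔽] V).comp (projClass b f c)) =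
      ((projClass b' f (μ c)).comp (g : V →ₗ[𝔽] V)) := by
    apply b.ext
    intro j
    simp only [LinearMap.comp_apply, LinearEquiv.coe_coe]
    rw [show (projClass b f c) (b j) = if Connected b f c j then b j else 0 from
        b.constr_basis 𝔽 _ j, hb j,
      show (projClass b' f (μ c)) (b' (μ j)) =
        if Connected b' f (μ c) (μ j) then b' (μ j) else 0 from b'.constr_basis 𝔽 _ (μ j)]
    by_cases hc : Connected b f c j
    · rw [if_pos hc, if_pos ((connected_iff b b' f μ g hb hf c j).1 hc), hb j]
    · rw [if_neg hc, if_neg (fun hcc => hc ((connected_iff b b' f μ g hb hf c j).2 hcc)),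
        map_zero]
  exact LinearMap.congr_fun key x

lemma approxStep_map (hb : ∀ i, g (b i) = b' (μ i))
    (hf : ∀ v : Fin (m + 1) → V, f (fun k => g (v k)) = g (f v))
    {c d : I} (h : ApproxStep b f c d) : ApproxStep b' f (μ c) (μ d) := by
  obtain ⟨k₁, k₂, hk, hcase⟩ := h
  refine ⟨k₁, k₂, hk, ?_⟩
  have hmem : ∀ (e : I) (x : V), x ∈ classSpan b f e → g x ∈ classSpan b' f (μ e) := by
    intro e x hx
    rw [← classSpan_map b b' f μ g hb hf e]
    exact ⟨x, hx, rfl⟩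
  have hproj : ∀ (e : I) (v : Fin (m + 1) → V),
      projClass b f e (f v) ≠ 0 → projClass b' f (μ e) (f fun k => g (v k)) ≠ 0 := by
    intro e v hne h0
    apply hne
    have : projClass b' f (μ e) (f fun k => g (v k)) = g (projClass b f e (f v)) := by
      rw [hf v, ← projClass_comm b b' f μ g hb hf e (f v)]
    rw [this] at h0
    exact g.map_eq_zero_iff.1 h0
  rcases hcase with ⟨v, h1, h2, h3⟩ | ⟨v, h1, h2, h3⟩
  · exact Or.inl ⟨fun k => g (v k), hmem d _ h1, hmem d _ h2, hproj c v h3⟩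
  · exact Or.inr ⟨fun k => g (v k), hmem c _ h1, hmem c _ h2, hproj d v h3⟩

lemma approx_map (hb : ∀ i, g (b i) = b' (μ i))
    (hf : ∀ v : Fin (m + 1) → V, f (fun k => g (v k)) = g (f v))
    {i j : I} (h : Approx b f i j) : Approx b' f (μ i) (μ j) := by
  refine Relation.ReflTransGen.lift μ ?_ _ _ h
  intro a c hac
  rcases hac with h1 | h2
  · exact Or.inl (connected_map b b' f μ g hb hf h1)
  · exact Or.inr (approxStep_map b b' f μ g hb hf h2)

lemma approx_iff (hb : ∀ i, g (b i) = b' (μ i))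
    (hf : ∀ v : Fin (m + 1) → V, f (fun k => g (v k)) = g (f v))
    (i j : I) : Approx b f i j ↔ Approx b' f (μ i) (μ j) := by
  constructor
  · exact approx_map b b' f μ g hb hf
  · intro h
    have := approx_map b' b f μ.symm g.symm (hb_symm b b' μ g hb) (hf_symm f g hf) h
    simpa using this

lemma hatSpan_map (hb : ∀ i, g (b i) = b' (μ i))
    (hf : ∀ v : Fin (m + 1) → V, f (fun k => g (v k)) = g (f v)) (i : I) :
    Submodule.map (g : V →ₗ[𝔽] V) (hatSpan b f i) = hatSpan b' f (μ i) := by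
  rw [hatSpan, Submodule.map_span, hatSpan]
  congr 1
  rw [← Set.image_comp]
  ext x
  constructor
  · rintro ⟨j, hj, rfl⟩
    exact ⟨μ j, (approx_iff b b' f μ g hb hf i j).1 hj, (hb j).symm⟩
  · rintro ⟨j', hj', rfl⟩
    refine ⟨μ.symm j', ?_, ?_⟩
    · have h2 := (approx_iff b b' f μ g hb hf i (μ.symm j')).2
      simp only [μ.apply_symm_apply] at h2
      exact h2 hj'
    · show g (b (μ.symm j')) = b' j'
      rw [hb (μ.symm j'), μ.apply_symm_apply]

lemma fullComm (hm : 1 ≤ m) (hb : ∀ i, g (b i) = b' (μ i))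
    (hg : ∀ (i j : I) (k₁ k₂ : Fin (m + 1)), k₁ < k₂ → ∀ v : Fin (m + 1) → V,
      f (Function.update (Function.update (fun t => g (v t)) k₁ (b' (μ i))) k₂ (b' (μ j))) =
        g (f (Function.update (Function.update v k₁ (b i)) k₂ (b j)))) :
    ∀ v : Fin (m + 1) → V, f (fun k => g (v k)) = g (f v) := by
  set k₁ : Fin (m + 1) := ⟨0, by omega⟩ with hk₁
  set k₂ : Fin (m + 1) := ⟨1, by omega⟩ with hk₂
  have hk : k₁ < k₂ := by simp [hk₁, hk₂, Fin.lt_def]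
  have hne : k₁ ≠ k₂ := ne_of_lt hk
  have step1 : ∀ (i : I) (w₂ : V) (v : Fin (m + 1) → V),
      f (Function.update (Function.update (fun t => g (v t)) k₁ (b' (μ i))) k₂ (g w₂)) =
        g (f (Function.update (Function.update v k₁ (b i)) k₂ w₂)) := by
    intro i w₂ v
    have key : ((f.toLinearMap (Function.update (fun t => g (v t)) k₁ (b' (μ i))) k₂).comp
          (g : V →ₗ[𝔽] V)) =
        ((g : V →ₗ[𝔽] V).comp (f.toLinearMap (Function.update v k₁ (b i)) k₂)) := by
      apply b.ext
      intro j
      show f (Function.update (Function.update (fun t => g (v t)) k₁ (b' (μ i))) k₂ (g (b j))) =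
        g (f (Function.update (Function.update v k₁ (b i)) k₂ (b j)))
      rw [hb j]
      exact hg i j k₁ k₂ hk v
    exact LinearMap.congr_fun key w₂
  have step2 : ∀ (w₁ w₂ : V) (v : Fin (m + 1) → V),
      f (Function.update (Function.update (fun t => g (v t)) k₁ (g w₁)) k₂ (g w₂)) =
        g (f (Function.update (Function.update v k₁ w₁) k₂ w₂)) := by
    intro w₁ w₂ v
    have key : ((f.toLinearMap (Function.update (fun t => g (v t)) k₂ (g w₂)) k₁).comp
          (g : V →ₗ[𝔽] V)) =
        ((g : V →ₗ[𝔽] V).comp (f.toLinearMap (Function.update v k₂ w₂) k₁)) := by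
      apply b.ext
      intro j
      show f (Function.update (Function.update (fun t => g (v t)) k₂ (g w₂)) k₁ (g (b j))) =
        g (f (Function.update (Function.update v k₂ w₂) k₁ (b j)))
      rw [hb j]
      have eswapL : Function.update (Function.update (fun t => g (v t)) k₂ (g w₂)) k₁ (b' (μ j)) =
          Function.update (Function.update (fun t => g (v t)) k₁ (b' (μ j))) k₂ (g w₂) :=
        Function.update_comm hne.symm _ _ _
      have eswapR : Function.update (Function.update v k₂ w₂) k₁ (b j) =
          Function.update (Function.update v k₁ (b j)) k₂ w₂ :=
        Function.update_comm hne.symm _ _ _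
      rw [eswapL, eswapR]
      exact step1 j w₂ v
    have h := LinearMap.congr_fun key w₁
    have eswapL : Function.update (Function.update (fun t => g (v t)) k₁ (g w₁)) k₂ (g w₂) =
        Function.update (Function.update (fun t => g (v t)) k₂ (g w₂)) k₁ (g w₁) :=
      Function.update_comm hne _ _ _
    have eswapR : Function.update (Function.update v k₁ w₁) k₂ w₂ =
        Function.update (Function.update v k₂ w₂) k₁ w₁ :=
      Function.update_comm hne _ _ _
    rw [eswapL, eswapR]
    exact h
  intro v
  have h := step2 (v k₁) (v k₂) v
  have e1 : Function.update (fun t => g (v t)) k₁ (g (v k₁)) = fun t => g (v t) :=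
    Function.update_eq_self k₁ (fun t => g (v t))
  have e2 : Function.update v k₁ (v k₁) = v := Function.update_eq_self k₁ v
  have e3 : Function.update (fun t => g (v t)) k₂ (g (v k₂)) = fun t => g (v t) :=
    Function.update_eq_self k₂ (fun t => g (v t))
  have e4 : Function.update v k₂ (v k₂) = v := Function.update_eq_self k₂ v
  rw [e1, e2, e3, e4] at h
  exact h

end Stmt14Aux

/-- Corollary. -/
theorem stmt14 (hm : 1 ≤ m) (b b' : Module.Basis I 𝔽 V)
    (f : MultilinearMap 𝔽 (fun _ : Fin (m + 1) => V) V) (μ : I ≃ I)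
    (hg : ∀ (i j : I) (k₁ k₂ : Fin (m + 1)), k₁ < k₂ → ∀ v : Fin (m + 1) → V,
      f (Function.update (Function.update (fun t => (b.equiv b' μ) (v t)) k₁ (b' (μ i))) k₂ (b' (μ j))) =
        (b.equiv b' μ) (f (Function.update (Function.update v k₁ (b i)) k₂ (b j)))) :
    IsoDecomp f {W | ∃ i, W = hatSpan b f i} {W | ∃ i, W = hatSpan b' f i} := by
  classical
  have hb : ∀ i, (b.equiv b' μ) (b i) = b' (μ i) := fun i => b.equiv_apply i b' μ
  have hf : ∀ v : Fin (m + 1) → V, f (fun k => (b.equiv b' μ) (v k)) = (b.equiv b' μ) (f v) :=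
    fullComm b b' f μ (b.equiv b' μ) hm hb hg
  refine ⟨b.equiv b' μ, hf, ?_⟩
  ext W'
  simp only [Set.mem_image, Set.mem_setOf_eq]
  constructor
  · rintro ⟨W, ⟨i, rfl⟩, rfl⟩
    exact ⟨μ i, hatSpan_map b b' f μ (b.equiv b' μ) hb hf i⟩
  · rintro ⟨i', rfl⟩
    exact ⟨hatSpan b f (μ.symm i'), ⟨μ.symm i', rfl⟩, by
      rw [hatSpan_map b b' f μ (b.equiv b' μ) hb hf (μ.symm i'), μ.apply_symm_apply]⟩
end
end
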